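/- Let n be a positive integer and x_1, …, x_n ≥ 0. Define a_i = (x_1 + ⋯ + x_i)/i and let m_i be the lower median of x_1, …, x_i. Then Σ_{i=1}^n (m_i − a_i)^2 ≤ 2 Σ_{i=1}^n x_i^2. -/

import Mathlib

open MeasureTheory Set Filter

noncomputable def sortAsc (l : List ℝ) : List ℝ := l.mergeSort (· ≤ ·)
noncomputable def sortDesc (l : List ℝ) : List ℝ := (sortAsc l).reverse
noncomputable def listLowerMedian (l : List ℝ) : ℝ := (sortAsc l).getD ((l.length - 1) / 2) 0
def seg (x : ℕ → ℝ) (i : ℕ) : List ℝ := (List.range i).map (fun j => x (j+1))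

/-! ### Auxiliary lemmas -/

lemma sortAsc_perm (l : List ℝ) : (sortAsc l).Perm l := List.mergeSort_perm l _

lemma sortAsc_sorted (l : List ℝ) : (sortAsc l).Pairwise (· ≤ ·) := by
  have h := List.pairwise_mergeSort (le := fun a b : ℝ => decide (a ≤ b))
    (fun a b c hab hbc => by simp_all; linarith)
    (fun a b => by simpa using le_total a b) l
  exact h.imp (fun h => by simpa using h)

lemma sortDesc_perm (l : List ℝ) : (sortDesc l).Perm l :=
  ((sortAsc l).reverse_perm).trans (sortAsc_perm l)

lemma sortDesc_sorted (l : List ℝ) : (sortDesc l).Pairwise (· ≥ ·) := by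
  rw [sortDesc, List.pairwise_reverse]; exact sortAsc_sorted l

lemma sortDesc_length (l : List ℝ) : (sortDesc l).length = l.length :=
  (sortDesc_perm l).length_eq

lemma sortAsc_length (l : List ℝ) : (sortAsc l).length = l.length :=
  (sortAsc_perm l).length_eq

lemma sortDesc_nonneg {l : List ℝ} (h0 : ∀ a ∈ l, 0 ≤ a) :
    ∀ a ∈ sortDesc l, 0 ≤ a := fun a ha => h0 a ((sortDesc_perm l).mem_iff.1 ha)

lemma getD_nonneg {l : List ℝ} (h0 : ∀ a ∈ l, 0 ≤ a) (j : ℕ) :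
    0 ≤ (sortDesc l).getD j 0 := by
  by_cases hj : j < (sortDesc l).length
  · rw [List.getD_eq_getElem _ _ hj]
    exact sortDesc_nonneg h0 _ (List.getElem_mem hj)
  · rw [List.getD_eq_default _ _ (le_of_not_gt hj)]

lemma sorted_desc_getD_ge {s : List ℝ} (hs : s.Pairwise (· ≥ ·)) {t : ℝ} {j : ℕ}
    (hc : j + 1 ≤ s.countP (fun a => decide (t ≤ a))) : t ≤ s.getD j 0 := by
  have hjlen : j < s.length := by
    have := List.countP_le_length (l := s) (p := fun a => decide (t ≤ a))
    omega
  rw [List.getD_eq_getElem _ _ hjlen]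
  by_contra hlt
  push_neg at hlt
  have hsplit : s.countP (fun a => decide (t ≤ a))
      = (s.take j).countP (fun a => decide (t ≤ a)) + (s.drop j).countP (fun a => decide (t ≤ a)) := by
    conv_lhs => rw [← List.take_append_drop j s]
    exact List.countP_append
  have h1 : (s.take j).countP (fun a => decide (t ≤ a)) ≤ j := by
    calc (s.take j).countP (fun a => decide (t ≤ a)) ≤ (s.take j).length :=
          List.countP_le_length
    _ ≤ j := by simp [List.length_take]
  have hdropsorted : (s.drop j).Pairwise (· ≥ ·) := hs.sublist (List.drop_sublist j s)
  have hdropeq : s.drop j = s[j] :: s.drop (j+1) := List.drop_eq_getElem_cons hjlen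
  have h2 : (s.drop j).countP (fun a => decide (t ≤ a)) = 0 := by
    rw [List.countP_eq_zero]
    intro a ha
    rw [hdropeq] at ha hdropsorted
    have : a ≤ s[j] := by
      rcases (List.mem_cons).1 ha with rfl | ha'
      · exact le_refl _
      · exact (List.pairwise_cons.1 hdropsorted).1 a ha'
    simp only [decide_eq_true_eq]
    push_neg
    linarith
  omega

lemma orderStat_mono {l l' : List ℝ} (hsub : l.Sublist l') (h0 : ∀ a ∈ l', 0 ≤ a) (j : ℕ) :
    (sortDesc l).getD j 0 ≤ (sortDesc l').getD j 0 := by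
  by_cases hj : j < (sortDesc l).length
  · set t := (sortDesc l)[j] with ht
    rw [List.getD_eq_getElem _ _ hj]
    apply sorted_desc_getD_ge (sortDesc_sorted l')
    have hcount1 : j + 1 ≤ (sortDesc l).countP (fun a => decide (t ≤ a)) := by
      have htake : ((sortDesc l).take (j+1)).countP (fun a => decide (t ≤ a)) = j + 1 := by
        rw [List.countP_eq_length.2, List.length_take]
        · omega
        · intro a ha
          simp only [decide_eq_true_eq]
          obtain ⟨k, hk, rfl⟩ := List.mem_take_iff_getElem.1 ha
          have hkj : k ≤ j := by omega
          rcases eq_or_lt_of_le hkj with rfl | hkj'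
          · exact le_refl _
          · exact (sortDesc_sorted l).rel_get_of_lt (by simpa using hkj')
      calc j + 1 = ((sortDesc l).take (j+1)).countP (fun a => decide (t ≤ a)) := htake.symm
      _ ≤ (sortDesc l).countP (fun a => decide (t ≤ a)) :=
          (List.take_sublist _ _).countP_le
    calc j + 1 ≤ (sortDesc l).countP (fun a => decide (t ≤ a)) := hcount1
    _ = l.countP (fun a => decide (t ≤ a)) := (sortDesc_perm l).countP_eq _
    _ ≤ l'.countP (fun a => decide (t ≤ a)) := hsub.countP_le
    _ = (sortDesc l').countP (fun a => decide (t ≤ a)) := ((sortDesc_perm l').countP_eq _).symm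
  · rw [List.getD_eq_default _ _ (le_of_not_gt hj)]
    exact getD_nonneg h0 j

lemma take_sum_eq_sum_getD (L : List ℝ) (t : ℕ) :
    (L.take t).sum = ∑ j ∈ Finset.range t, L.getD j 0 := by
  induction L generalizing t with
  | nil => simp
  | cons a L ih =>
    cases t with
    | zero => simp
    | succ t =>
      rw [Finset.sum_range_succ']
      simp only [List.take_succ_cons, List.sum_cons, List.getD_cons_succ, List.getD_cons_zero]
      rw [ih t]; ring

lemma med_bound_core (l : List ℝ) (hl : 1 ≤ l.length) (h0 : ∀ a ∈ l, 0 ≤ a) :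
    |(l.length : ℝ) * listLowerMedian l - l.sum| ≤ ((sortAsc l).drop ((l.length - 1) / 2 + 1)).sum := by
  set i := l.length with hi
  set j0 := (i - 1) / 2 with hj0
  set s := sortAsc l with hs
  have hslen : s.length = i := sortAsc_length l
  have hj0i : j0 < i := by omega
  have hj0s : j0 < s.length := by omega
  have hsorted : s.Pairwise (· ≤ ·) := sortAsc_sorted l
  have hnon : ∀ a ∈ s, 0 ≤ a := fun a ha => h0 a ((sortAsc_perm l).mem_iff.1 ha)
  set m := listLowerMedian l with hm
  have hmget : m = s[j0] := by
    rw [hm, listLowerMedian, List.getD_eq_getElem _ _ hj0s]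
  have hdropeq : s.drop j0 = s[j0] :: s.drop (j0+1) := List.drop_eq_getElem_cons hj0s
  set t1 := s.take j0 with ht1
  set rest := s.drop (j0+1) with hrest
  have hsplit : s = t1 ++ (m :: rest) := by
    conv_lhs => rw [← List.take_append_drop j0 s]
    rw [hdropeq, ← hmget]
  have hcross : ∀ a ∈ t1, ∀ b ∈ (m :: rest), a ≤ b := by
    have := hsorted
    rw [hsplit, List.pairwise_append] at this
    exact this.2.2
  have htle : ∀ a ∈ t1, a ≤ m := fun a ha => hcross a ha m (List.mem_cons_self)
  have hrge : ∀ b ∈ rest, m ≤ b := by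
    have hpc : (m :: rest).Pairwise (· ≤ ·) := by
      have := hsorted
      rw [hsplit, List.pairwise_append] at this
      exact this.2.1
    exact fun b hb => (List.pairwise_cons.1 hpc).1 b hb
  have hm0 : 0 ≤ m := by
    rw [hmget]; exact hnon _ (List.getElem_mem hj0s)
  have ht1len : t1.length = j0 := by rw [ht1]; simp [List.length_take]; omega
  have hrestlen : rest.length = i - j0 - 1 := by rw [hrest]; simp [List.length_drop]; omega
  have hsum : l.sum = t1.sum + m + rest.sum := by
    have : l.sum = s.sum := ((sortAsc_perm l).sum_eq).symm
    rw [this]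
    conv_lhs => rw [hsplit]
    simp [List.sum_append]; ring
  have ht1sum_le : t1.sum ≤ (j0 : ℝ) * m := by
    have := List.sum_le_card_nsmul t1 m htle
    rwa [ht1len, nsmul_eq_mul] at this
  have ht1sum_ge : 0 ≤ t1.sum := List.sum_nonneg (fun a ha => hnon a (by rw [hsplit]; simp [ha]))
  have hrest_ge : ((i - j0 - 1 : ℕ) : ℝ) * m ≤ rest.sum := by
    have := List.card_nsmul_le_sum rest m hrge
    rwa [hrestlen, nsmul_eq_mul] at this
  have hrest0 : 0 ≤ rest.sum :=
    List.sum_nonneg (fun a ha => hnon a (by rw [hsplit]; simp [ha]))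
  have hj0le : (j0 : ℝ) ≤ ((i - j0 - 1 : ℕ) : ℝ) := by
    have : j0 ≤ i - j0 - 1 := by omega
    exact_mod_cast this
  have hcast : ((i - j0 - 1 : ℕ) : ℝ) = (i : ℝ) - j0 - 1 := by
    rw [Nat.sub_sub, Nat.cast_sub (by omega : j0 + 1 ≤ i)]
    push_cast; ring
  rw [abs_le]
  constructor
  · have : l.sum ≤ (j0:ℝ)*m + m + rest.sum := by rw [hsum]; linarith
    have hji : (j0:ℝ) + 1 ≤ (i:ℝ) := by exact_mod_cast hj0i
    nlinarith
  · have h1 : (i:ℝ)*m - l.sum ≤ (j0:ℝ) * m := by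
      rw [hsum]
      nlinarith [hrest_ge, ht1sum_ge, hcast]
    have h2 : (j0:ℝ)*m ≤ rest.sum := by
      calc (j0:ℝ)*m ≤ ((i - j0 - 1:ℕ):ℝ)*m := by nlinarith
      _ ≤ rest.sum := hrest_ge
    linarith

lemma hardy_telescope (y : ℕ → ℝ) (R : ℕ) :
    ∑ r ∈ Finset.Icc 1 R, (((∑ j ∈ Finset.Icc 1 r, y j)/r)^2
        - 2*((∑ j ∈ Finset.Icc 1 r, y j)/r) * y r)
      + (∑ j ∈ Finset.Icc 1 R, y j)^2/R ≤ 0 := by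
  induction R with
  | zero => simp
  | succ R ih =>
    rw [Finset.sum_Icc_succ_top (by omega : 1 ≤ R + 1)]
    have hU : (∑ j ∈ Finset.Icc 1 (R+1), y j) = (∑ j ∈ Finset.Icc 1 R, y j) + y (R+1) :=
      Finset.sum_Icc_succ_top (by omega) _
    set v := ∑ j ∈ Finset.Icc 1 R, y j with hv
    set u := ∑ j ∈ Finset.Icc 1 (R+1), y j with hu
    have hyR : y (R+1) = u - v := by rw [hU]; ring
    rcases Nat.eq_zero_or_pos R with rfl | hR
    · simp at hv ⊢
      rw [hyR, hv]
      norm_num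
      nlinarith [sq_nonneg u]
    · have hRr : (1:ℝ) ≤ (R:ℝ) := by exact_mod_cast hR
      have key : (u/((R:ℝ)+1))^2 - 2*(u/((R:ℝ)+1))*(u - v) + u^2/((R:ℝ)+1) - v^2/R ≤ 0 := by
        have h1 : (0:ℝ) < R := by linarith
        have h2 : (0:ℝ) < (R:ℝ)+1 := by linarith
        have hne1 : ((R:ℝ)) ≠ 0 := by positivity
        have hne2 : ((R:ℝ)+1) ≠ 0 := by positivity
        rw [← sub_nonneg]
        have expand : 0 - ((u/((R:ℝ)+1))^2 - 2*(u/((R:ℝ)+1))*(u - v) + u^2/((R:ℝ)+1) - v^2/R)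
            = ((R:ℝ)*u - ((R:ℝ)+1)*v)^2 / ((R:ℝ)*((R:ℝ)+1)^2) := by
          field_simp
          ring
        rw [expand]
        positivity
      rw [hyR]
      push_cast
      nlinarith [ih, key]

lemma hardy_ineq (y : ℕ → ℝ) (hy : ∀ r, 0 ≤ y r) (R : ℕ) :
    ∑ r ∈ Finset.Icc 1 R, ((∑ j ∈ Finset.Icc 1 r, y j)/r)^2
      ≤ 4 * ∑ r ∈ Finset.Icc 1 R, (y r)^2 := by
  set A : ℕ → ℝ := fun r => (∑ j ∈ Finset.Icc 1 r, y j)/r with hA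
  set Q := ∑ r ∈ Finset.Icc 1 R, (A r)^2 with hQ
  set P := ∑ r ∈ Finset.Icc 1 R, (A r) * y r with hP
  set X := ∑ r ∈ Finset.Icc 1 R, (y r)^2 with hX
  have hQ2P : Q ≤ 2 * P := by
    have ht := hardy_telescope y R
    have h2 : 0 ≤ (∑ j ∈ Finset.Icc 1 R, y j)^2/R := by positivity
    have h3 : ∑ r ∈ Finset.Icc 1 R, ((A r)^2 - 2*(A r)*y r) ≤ 0 := by linarith [ht]
    rw [Finset.sum_sub_distrib] at h3
    have heq : ∑ r ∈ Finset.Icc 1 R, 2*(A r)*y r = 2 * P := by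
      rw [hP, Finset.mul_sum]; apply Finset.sum_congr rfl; intros; ring
    rw [heq] at h3
    linarith
  have hC : P^2 ≤ Q * X := by
    rw [hP, hQ, hX]
    exact Finset.sum_mul_sq_le_sq_mul_sq _ _ _
  have hQ0 : 0 ≤ Q := Finset.sum_nonneg (fun r _ => sq_nonneg _)
  have hX0 : 0 ≤ X := Finset.sum_nonneg (fun r _ => sq_nonneg _)
  have hP0 : 0 ≤ P := Finset.sum_nonneg (fun r hr => by
    have h1 : 0 ≤ A r :=
      div_nonneg (Finset.sum_nonneg (fun j _ => hy j)) (Nat.cast_nonneg r)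
    exact mul_nonneg h1 (hy r))
  rcases eq_or_lt_of_le hQ0 with hq | hq
  · linarith
  · nlinarith [hC, hQ2P, hq]

lemma pair_sum (f : ℕ → ℝ) (N : ℕ) :
    ∑ i ∈ Finset.Icc 2 (2*N+1), f i = ∑ r ∈ Finset.Icc 1 N, (f (2*r) + f (2*r+1)) := by
  induction N with
  | zero => simp
  | succ N ih =>
    have h1 : 2*(N+1)+1 = (2*N+2)+1 := by ring
    rw [h1, Finset.sum_Icc_succ_top (by omega : 2 ≤ 2*N+2+1),
        Finset.sum_Icc_succ_top (by omega : 2 ≤ 2*N+2),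
        Finset.sum_Icc_succ_top (by omega : 1 ≤ N+1), ih]
    have h2 : 2*(N+1) = 2*N+2 := by ring
    rw [h2, show 2*N+1+1 = 2*N+2 from by ring]
    ring

lemma range_map_sum (f : ℕ → ℝ) (n : ℕ) :
    ((List.range n).map f).sum = ∑ j ∈ Finset.range n, f j := by
  induction n with
  | zero => simp
  | succ n ih => rw [List.range_succ, Finset.sum_range_succ, ← ih]; simp

lemma icc_sum_eq_range_sum (f : ℕ → ℝ) (n : ℕ) :
    ∑ j ∈ Finset.Icc 1 n, f j = ∑ j ∈ Finset.range n, f (j+1) := by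
  rw [← Finset.Ico_add_one_right_eq_Icc, Finset.sum_Ico_eq_sum_range]
  simp [Nat.add_comm]

theorem median_hardy_stmt17 (n : ℕ) (hn : 1 ≤ n) (x : ℕ → ℝ)
    (hx : ∀ j, 1 ≤ j → j ≤ n → 0 ≤ x j) :
    ∑ i ∈ Finset.Icc 1 n,
        (listLowerMedian (seg x i) - (∑ j ∈ Finset.Icc 1 i, x j) / i) ^ 2
      ≤ 2 * ∑ i ∈ Finset.Icc 1 n, x i ^ 2 := by
  have hxseg : ∀ a ∈ seg x n, 0 ≤ a := by
    intro a ha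
    simp only [seg, List.mem_map, List.mem_range] at ha
    obtain ⟨j, hj, rfl⟩ := ha
    exact hx (j+1) (by omega) (by omega)
  set Y := sortDesc (seg x n) with hY
  set y : ℕ → ℝ := fun r => Y.getD (r-1) 0 with hy
  have hy0 : ∀ r, 0 ≤ y r := fun r => getD_nonneg hxseg _
  set U : ℕ → ℝ := fun r => ∑ j ∈ Finset.range r, Y.getD j 0 with hU
  have hUicc : ∀ r, U r = ∑ j ∈ Finset.Icc 1 r, y j := by
    intro r
    rw [icc_sum_eq_range_sum]
    apply Finset.sum_congr rfl
    intro j _; simp [hy]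
  have hU0 : ∀ r, 0 ≤ U r := fun r => Finset.sum_nonneg fun j _ => getD_nonneg hxseg j
  set g : ℕ → ℝ := fun i => (U (i/2) / i)^2 with hg
  -- Step 1: each term is at most g i
  have step1 : ∀ i ∈ Finset.Icc 1 n,
      (listLowerMedian (seg x i) - (∑ j ∈ Finset.Icc 1 i, x j) / i) ^ 2 ≤ g i := by
    intro i hi
    rw [Finset.mem_Icc] at hi
    obtain ⟨hi1, hin⟩ := hi
    have hlen : (seg x i).length = i := by simp [seg]
    have hseg0 : ∀ a ∈ seg x i, 0 ≤ a := by
      intro a ha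
      simp only [seg, List.mem_map, List.mem_range] at ha
      obtain ⟨j, hj, rfl⟩ := ha
      exact hx (j+1) (by omega) (by omega)
    have hmed := med_bound_core (seg x i) (by rw [hlen]; exact hi1) hseg0
    rw [hlen] at hmed
    have hidx : (sortAsc (seg x i)).length - i/2 = (i-1)/2 + 1 := by
      rw [sortAsc_length, hlen]; omega
    have hTeq : ((sortAsc (seg x i)).drop ((i-1)/2 + 1)).sum
        = ∑ j ∈ Finset.range (i/2), (sortDesc (seg x i)).getD j 0 := by
      rw [← take_sum_eq_sum_getD, sortDesc, List.take_reverse, hidx, List.sum_reverse]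
    have hsub : (seg x i).Sublist (seg x n) := by
      have hseq : seg x i = (seg x n).take i := by
        rw [seg, seg, ← List.map_take, List.take_range,
          show i ⊓ n = i from min_eq_left hin]
      rw [hseq]; exact List.take_sublist _ _
    have hTle : ∑ j ∈ Finset.range (i/2), (sortDesc (seg x i)).getD j 0 ≤ U (i/2) :=
      Finset.sum_le_sum fun j _ => orderStat_mono hsub hxseg j
    have hsumeq : (∑ j ∈ Finset.Icc 1 i, x j) = (seg x i).sum := by
      rw [seg, range_map_sum, icc_sum_eq_range_sum]
    have hipos : (0:ℝ) < i := by exact_mod_cast hi1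
    rw [hsumeq]
    have habs : |(i:ℝ) * listLowerMedian (seg x i) - (seg x i).sum| ≤ U (i/2) := by
      calc |(i:ℝ) * listLowerMedian (seg x i) - (seg x i).sum|
          ≤ ((sortAsc (seg x i)).drop ((i-1)/2 + 1)).sum := hmed
      _ = ∑ j ∈ Finset.range (i/2), (sortDesc (seg x i)).getD j 0 := hTeq
      _ ≤ U (i/2) := hTle
    rw [abs_le] at habs
    have hexpr : listLowerMedian (seg x i) - (seg x i).sum / i
        = ((i:ℝ) * listLowerMedian (seg x i) - (seg x i).sum)/i := by
      field_simp
    rw [hexpr]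
    apply sq_le_sq'
    · rw [← neg_div]
      exact (div_le_div_iff_of_pos_right hipos).2 habs.1
    · exact (div_le_div_iff_of_pos_right hipos).2 habs.2
  have main1 : ∑ i ∈ Finset.Icc 1 n,
      (listLowerMedian (seg x i) - (∑ j ∈ Finset.Icc 1 i, x j) / i) ^ 2
      ≤ ∑ i ∈ Finset.Icc 1 n, g i := Finset.sum_le_sum step1
  -- drop i = 1 (g 1 = 0) and extend to Icc 2 (2n+1)
  have hg1 : g 1 = 0 := by simp [hg, hU]
  have hsplit : Finset.Icc 1 n = insert 1 (Finset.Icc 2 n) := by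
    ext a
    simp only [Finset.mem_Icc, Finset.mem_insert]
    omega
  have main2 : ∑ i ∈ Finset.Icc 1 n, g i ≤ ∑ i ∈ Finset.Icc 2 (2*n+1), g i := by
    rw [hsplit, Finset.sum_insert (by simp), hg1, zero_add]
    exact Finset.sum_le_sum_of_subset_of_nonneg
      (Finset.Icc_subset_Icc_right (by omega))
      (fun i _ _ => by positivity)
  rw [pair_sum g n] at main2
  -- pair bound
  have main3 : ∑ r ∈ Finset.Icc 1 n, (g (2*r) + g (2*r+1))
      ≤ ∑ r ∈ Finset.Icc 1 n, (1/2) * ((∑ j ∈ Finset.Icc 1 r, y j)/r)^2 := by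
    apply Finset.sum_le_sum
    intro r hr
    rw [Finset.mem_Icc] at hr
    have hr1 : 1 ≤ r := hr.1
    have e1 : (2*r)/2 = r := by omega
    have e2 : (2*r+1)/2 = r := by omega
    have hrr : (1:ℝ) ≤ (r:ℝ) := by exact_mod_cast hr1
    have hrpos : (0:ℝ) < (r:ℝ) := by linarith
    have hUr := hU0 r
    rw [hg]
    simp only [e1, e2]
    rw [← hUicc r]
    push_cast
    have k1 : U r/(2*(r:ℝ)+1) ≤ U r/(2*(r:ℝ)) := by
      apply div_le_div_of_nonneg_left hUr (by linarith) (by linarith)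
    have k1' : (U r/(2*(r:ℝ)+1))^2 ≤ (U r/(2*(r:ℝ)))^2 := by
      apply pow_le_pow_left₀ (by positivity) k1
    have k2 : (U r/(2*(r:ℝ)))^2 = 1/4 * (U r/(r:ℝ))^2 := by
      rw [show (2*(r:ℝ)) = (r:ℝ)*2 from by ring, ← div_div]
      ring
    linarith
  -- Hardy
  have main4 : ∑ r ∈ Finset.Icc 1 n, (1/2) * ((∑ j ∈ Finset.Icc 1 r, y j)/r)^2
      ≤ 2 * ∑ r ∈ Finset.Icc 1 n, (y r)^2 := by
    rw [← Finset.mul_sum]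
    have := hardy_ineq y hy0 n
    linarith
  -- identify ∑ y² with ∑ x²
  have hYlen : Y.length = n := by
    rw [hY, sortDesc_length]; simp [seg]
  have main5 : ∑ r ∈ Finset.Icc 1 n, (y r)^2 = ∑ i ∈ Finset.Icc 1 n, x i ^ 2 := by
    have e1 : ∑ r ∈ Finset.Icc 1 n, (y r)^2 = ∑ j ∈ Finset.range n, (Y.getD j 0)^2 := by
      rw [icc_sum_eq_range_sum]
      apply Finset.sum_congr rfl
      intro j _; simp [hy]
    have e2 : ∀ j, (Y.map (fun a => a^2)).getD j 0 = (Y.getD j 0)^2 := by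
      intro j
      have := List.getD_map Y (0:ℝ) (n := j) (fun a => a^2)
      simpa using this
    have e3 : ∑ j ∈ Finset.range n, (Y.getD j 0)^2 = (Y.map (fun a => a^2)).sum := by
      rw [show (Y.map (fun a => a^2)).sum = ((Y.map (fun a => a^2)).take n).sum from by
        rw [show n = (Y.map (fun a => a^2)).length from by simp [hYlen], List.take_length]]
      rw [take_sum_eq_sum_getD]
      apply Finset.sum_congr rfl
      intro j _
      exact (e2 j).symm
    have e4 : (Y.map (fun a => a^2)).sum = ((seg x n).map (fun a => a^2)).sum :=
      ((sortDesc_perm (seg x n)).map (fun a => a^2)).sum_eq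
    have e5 : ((seg x n).map (fun a => a^2)).sum = ∑ i ∈ Finset.Icc 1 n, x i ^ 2 := by
      rw [seg, List.map_map, range_map_sum, icc_sum_eq_range_sum]
      rfl
    rw [e1, e3, e4, e5]
  calc ∑ i ∈ Finset.Icc 1 n,
      (listLowerMedian (seg x i) - (∑ j ∈ Finset.Icc 1 i, x j) / i) ^ 2
      ≤ ∑ i ∈ Finset.Icc 1 n, g i := main1
  _ ≤ ∑ r ∈ Finset.Icc 1 n, (g (2*r) + g (2*r+1)) := main2
  _ ≤ ∑ r ∈ Finset.Icc 1 n, (1/2) * ((∑ j ∈ Finset.Icc 1 r, y j)/r)^2 := main3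
  _ ≤ 2 * ∑ r ∈ Finset.Icc 1 n, (y r)^2 := main4
  _ = 2 * ∑ i ∈ Finset.Icc 1 n, x i ^ 2 := by rw [main5]
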